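/- Let K be a field, A an n×n matrix over K with characteristic polynomial factorization χ_A = f_1^{m_1}···f_q^{m_q} into pairwise distinct monic irreducible factors, and let π_{A,e_j} = f_1^{r_1}···f_q^{r_q} be the factorization of the minimal annihilating polynomial of the unit vector e_j. Suppose ρ_1,…,ρ_q are natural numbers with ρ_p ≤ r_p for all p and ρ_i < r_i for at least one i, and let q'' = max{i : ρ_i < r_i}. Then for every natural number l: f_1(A)^{m_1} ··· f_{q''−1}(A)^{m_{q''−1}} · f_{q''}(A)^{ρ_{q''} + l} · f_{q''+1}(A)^{ρ_{q''+1}} ··· f_q(A)^{ρ_q} · e_j = 0 if and only if l ≥ r_{q''} − ρ_{q''}. -/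
import Mathlib


open Polynomial Matrix

private lemma prod_pow_dvd_iff {K : Type*} [Field K] {q : ℕ} (f : Fin q → K[X])
    (hfmonic : ∀ p, (f p).Monic) (hfirr : ∀ p, Irreducible (f p))
    (hfdist : Function.Injective f) (a b : Fin q → ℕ) :
    (∏ p, (f p) ^ (a p)) ∣ (∏ p, (f p) ^ (b p)) ↔ ∀ p, a p ≤ b p := by
  constructor
  · intro h p
    have hprime : Prime (f p) := (hfirr p).prime
    have h1 : (f p) ^ (a p) ∣ ∏ t, (f t) ^ (b t) :=
      dvd_trans (Finset.dvd_prod_of_mem (fun t => (f t) ^ (a t)) (Finset.mem_univ p)) h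
    rw [← Finset.mul_prod_erase Finset.univ _ (Finset.mem_univ p)] at h1
    have hnd : ¬ f p ∣ ∏ t ∈ Finset.univ.erase p, (f t) ^ (b t) := by
      intro hdvd
      obtain ⟨t, ht, hdt⟩ := hprime.exists_mem_finset_dvd hdvd
      have : f p ∣ f t := hprime.dvd_of_dvd_pow hdt
      have heq : f p = f t :=
        Polynomial.eq_of_monic_of_associated (hfmonic p) (hfmonic t)
          (associated_of_dvd_dvd this ((hfirr p).dvd_symm (hfirr t) this))
      have := hfdist heq
      subst this
      exact (Finset.mem_erase.mp ht).1 rfl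
    have h2 : (f p) ^ (a p) ∣ (f p) ^ (b p) :=
      hprime.pow_dvd_of_dvd_mul_right _ hnd h1
    exact (pow_dvd_pow_iff (hfirr p).ne_zero (hfirr p).not_isUnit).mp h2
  · intro h
    exact Finset.prod_dvd_prod_of_dvd _ _ fun p _ => pow_dvd_pow _ (h p)

theorem revision_annihilation_iff
    (K : Type*) [Field K] (n q : ℕ)
    (A : Matrix (Fin n) (Fin n) K)
    (f : Fin q → K[X]) (m : Fin q → ℕ)
    (hfmonic : ∀ p, (f p).Monic) (hfirr : ∀ p, Irreducible (f p))
    (hfdist : Function.Injective f) (hm : ∀ p, 1 ≤ m p)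
    (hfact : A.charpoly = ∏ p, (f p) ^ (m p))
    (j : Fin n) (π : K[X]) (hmonic : π.Monic)
    (hmin : ∀ h : K[X],
      (Polynomial.aeval A h).mulVec (Pi.single j 1) = 0 ↔ π ∣ h)
    (r : Fin q → ℕ) (hπ : π = ∏ p, (f p) ^ (r p))
    (ρ : Fin q → ℕ) (hρle : ∀ p, ρ p ≤ r p)
    (i : Fin q) (hi : ρ i < r i) (himax : ∀ p, i < p → ρ p = r p) :
    ∀ l : ℕ,
      (Polynomial.aeval A
        ((∏ p ∈ Finset.univ.filter (fun p => p < i), (f p) ^ (m p)) *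
          (f i) ^ (ρ i + l) *
          ∏ p ∈ Finset.univ.filter (fun p => i < p), (f p) ^ (ρ p))).mulVec
            (Pi.single j 1) = 0 ↔ r i - ρ i ≤ l := by
  intro l
  -- r p ≤ m p for all p, from π ∣ charpoly
  have hπdvd : π ∣ A.charpoly := by
    rw [← hmin]
    rw [Matrix.aeval_self_charpoly]
    exact Matrix.zero_mulVec _
  have hrm : ∀ p, r p ≤ m p := by
    rw [hπ, hfact] at hπdvd
    exact (prod_pow_dvd_iff f hfmonic hfirr hfdist r m).mp hπdvd
  -- exponent function
  set e : Fin q → ℕ := fun p => if p < i then m p else if p = i then ρ i + l else ρ p with he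
  have hP : ((∏ p ∈ Finset.univ.filter (fun p => p < i), (f p) ^ (m p)) *
          (f i) ^ (ρ i + l) *
          ∏ p ∈ Finset.univ.filter (fun p => i < p), (f p) ^ (ρ p))
      = ∏ p, (f p) ^ (e p) := by
    rw [← Finset.prod_filter_mul_prod_filter_not Finset.univ (fun p => p < i)
      (fun p => (f p) ^ (e p))]
    have hset : Finset.univ.filter (fun p : Fin q => ¬ p < i)
        = insert i (Finset.univ.filter (fun p => i < p)) := by
      ext p
      simp only [Finset.mem_filter, Finset.mem_univ, true_and, Finset.mem_insert]
      constructor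
      · intro hp
        rcases lt_or_eq_of_le (le_of_not_gt hp) with h | h
        · exact Or.inr h
        · exact Or.inl h.symm
      · rintro (rfl | hp)
        · exact lt_irrefl _
        · exact not_lt_of_gt hp
    rw [hset, Finset.prod_insert (by simp)]
    have h1 : ∏ p ∈ Finset.univ.filter (fun p : Fin q => p < i), (f p) ^ (e p)
        = ∏ p ∈ Finset.univ.filter (fun p => p < i), (f p) ^ (m p) := by
      refine Finset.prod_congr rfl fun p hp => ?_
      simp only [Finset.mem_filter] at hp
      simp [he, hp.2]
    have h2 : ∏ p ∈ Finset.univ.filter (fun p : Fin q => i < p), (f p) ^ (e p)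
        = ∏ p ∈ Finset.univ.filter (fun p => i < p), (f p) ^ (ρ p) := by
      refine Finset.prod_congr rfl fun p hp => ?_
      simp only [Finset.mem_filter] at hp
      have h3 : ¬ p < i := not_lt_of_gt hp.2
      have h4 : p ≠ i := ne_of_gt hp.2
      simp [he, h3, h4]
    have hei : e i = ρ i + l := by simp [he]
    rw [h1, h2, hei]
    ring
  rw [hP, hmin, hπ, prod_pow_dvd_iff f hfmonic hfirr hfdist]
  constructor
  · intro h
    have := h i
    simp only [he, lt_irrefl, if_false, if_true] at this
    omega
  · intro h p
    simp only [he]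
    split_ifs with h1 h2
    · exact hrm p
    · subst h2; omega
    · rw [himax p (lt_of_le_of_ne (le_of_not_gt h1) (Ne.symm h2))]
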